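/- Let a¹¹, a¹², a²¹, a²² be real numbers with a²¹ ≠ 0 satisfying the stability conditions a¹¹ + a²² < 0 and a¹¹a²² − a¹²a²¹ > 0, and let r > 0. Then the single-step sensory capacity and the information-thermodynamic efficiency of the stationary bipartite linear Langevin system satisfy the exact trade-off equality C̄_Y(r) = 4 η_Y(r) (1 − η_Y(r)). (Equation (43).) -/

import Mathlib

/-- Steady-state information-thermodynamic efficiency `η_Y` of the bipartite linear Langevin
system, as a function of the noise-intensity ratio `r = T^X / T^Y` (Eq. (A5)). -/
noncomputable def etaY (a11 a12 a21 a22 r : ℝ) : ℝ :=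
  (a11 + a22) * (a21 * a22 * r + a11 * a12) /
    (a21 * (a12 ^ 2 - 2 * a12 * a21 * r + r * ((a11 + a22) ^ 2 + a21 ^ 2 * r)))

/-- Steady-state single-step sensory capacity `C̄_Y` of the bipartite linear Langevin system,
as a function of the noise-intensity ratio `r = T^X / T^Y` (Eq. (A6)). -/
noncomputable def sCapY (a11 a12 a21 a22 r : ℝ) : ℝ :=
  4 * (a11 + a22) * (a21 * r - a12) * (a21 * a22 * r + a11 * a12) *
      (a21 ^ 2 * r - a12 * a21 + a11 * (a11 + a22)) /
    (a21 ^ 2 * (a12 ^ 2 - 2 * a12 * a21 * r + r * ((a11 + a22) ^ 2 + a21 ^ 2 * r)) ^ 2)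

/-- Equation (43): the exact trade-off `C̄_Y = 4 η_Y (1 − η_Y)` for stationary bipartite
linear Langevin systems. -/
theorem sCapY_eq_tradeoff (a11 a12 a21 a22 r : ℝ) (h21 : a21 ≠ 0)
    (hstab1 : a11 + a22 < 0) (hstab2 : a11 * a22 - a12 * a21 > 0) (hr : 0 < r) :
    sCapY a11 a12 a21 a22 r =
      4 * etaY a11 a12 a21 a22 r * (1 - etaY a11 a12 a21 a22 r) := by
  have hs : a11 + a22 ≠ 0 := ne_of_lt hstab1
  have hD : a12 ^ 2 - 2 * a12 * a21 * r + r * ((a11 + a22) ^ 2 + a21 ^ 2 * r) ≠ 0 := by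
    have : a12 ^ 2 - 2 * a12 * a21 * r + r * ((a11 + a22) ^ 2 + a21 ^ 2 * r)
        = (a12 - a21 * r) ^ 2 + r * (a11 + a22) ^ 2 := by ring
    rw [this]
    positivity
  unfold sCapY etaY
  have hD' : a12 * (a12 - a21 * r * 2) + r * ((a11 + a22) ^ 2 + a21 ^ 2 * r) ≠ 0 := by
    convert hD using 1; ring
  field_simp
  ring
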